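/- arXiv:0804.4410 — 2 statements merged into one kernel-verified Lean document; each statement's English description precedes it below -/
import Mathlib

section
/- Let k be a finite field and r ∈ k^× a nonzero element. If the word α₁α₂…α_l lies in A_r, then the word α₁…α_{l−1} (obtained by deleting the last letter) lies in C_r, and the word α₂…α_l (obtained by deleting the first letter) lies in A_r if and only if α₁ = r + r⁻¹. -/
/-- The monoid homomorphism π sending a word α₁…α_l over k to the matrix product
[[0,1],[−1,α₁]] ⋯ [[0,1],[−1,α_l]]. -/
def piWord {k : Type*} [Field k] (w : List k) : Matrix (Fin 2) (Fin 2) k :=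
  (w.map fun α => !![0, 1; -1, α]).prod

/-- A_r : words w with π(w) = [[a,b],[c,d]] satisfying d = b·r and b ≠ 0. -/
def Ar {k : Type*} [Field k] (r : k) : Set (List k) :=
  {w | piWord w 1 1 = piWord w 0 1 * r ∧ piWord w 0 1 ≠ 0}

lemma piWord_append {k : Type*} [Field k] (u v : List k) :
    piWord (u ++ v) = piWord u * piWord v := by
  simp [piWord]

lemma det_piWord {k : Type*} [Field k] (w : List k) : (piWord w).det = 1 := by
  induction w with
  | nil => simp [piWord]
  | cons a t ih =>
    have : piWord (a :: t) = !![(0:k), 1; -1, a] * piWord t := by simp [piWord]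
    rw [this, Matrix.det_mul, ih, Matrix.det_fin_two_of]
    ring

theorem stmt3 {k : Type*} [Field k] [Fintype k] (r : k) (hr : r ≠ 0)
    (α₁ : k) (w : List k) (h : α₁ :: w ∈ Ar r) :
    (α₁ :: w).dropLast ∉ Ar r ∧ (w ∈ Ar r ↔ α₁ = r + r⁻¹) := by
  obtain ⟨h1, h2⟩ := h
  constructor
  · intro hu
    obtain ⟨hu1, hu2⟩ := hu
    have hne : α₁ :: w ≠ [] := by simp
    have hsplit : (α₁ :: w).dropLast ++ [(α₁ :: w).getLast hne] = α₁ :: w :=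
      List.dropLast_append_getLast hne
    set u := (α₁ :: w).dropLast with hudef
    set β := (α₁ :: w).getLast hne with hβ
    have hπ : piWord (α₁ :: w) = piWord u * !![(0:k), 1; -1, β] := by
      rw [← hsplit, piWord_append]
      simp [piWord]
    have e01 : piWord (α₁ :: w) 0 1 = piWord u 0 0 + piWord u 0 1 * β := by
      rw [hπ]; simp [Matrix.mul_apply, Fin.sum_univ_two]
    have e11 : piWord (α₁ :: w) 1 1 = piWord u 1 0 + piWord u 1 1 * β := by
      rw [hπ]; simp [Matrix.mul_apply, Fin.sum_univ_two]
    have hdet := det_piWord u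
    rw [Matrix.det_fin_two] at hdet
    rw [e01, e11, hu1] at h1
    have hc : piWord u 1 0 = piWord u 0 0 * r := by
      linear_combination h1
    rw [hc, hu1] at hdet
    exact zero_ne_one (by linear_combination hdet : (0:k) = 1)
  · have hπ : piWord (α₁ :: w) = !![(0:k), 1; -1, α₁] * piWord w := by simp [piWord]
    have e01 : piWord (α₁ :: w) 0 1 = piWord w 1 1 := by
      rw [hπ]; simp [Matrix.mul_apply, Fin.sum_univ_two]
    have e11 : piWord (α₁ :: w) 1 1 = -piWord w 0 1 + α₁ * piWord w 1 1 := by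
      rw [hπ]; simp [Matrix.mul_apply, Fin.sum_univ_two]
    rw [e01] at h2
    rw [e11, e01] at h1
    constructor
    · rintro ⟨hw1, hw2⟩
      rw [hw1] at h1 h2
      have hb : piWord w 0 1 ≠ 0 := hw2
      field_simp
      have := h1
      linear_combination (mul_left_cancel₀ hb (by linear_combination this : piWord w 0 1 * (α₁ * r) = piWord w 0 1 * (r * r + 1)))
    · intro hα
      subst hα
      have hd : piWord w 1 1 ≠ 0 := h2
      have hw1 : piWord w 1 1 = piWord w 0 1 * r := by
        field_simp at h1
        linear_combination h1
      refine ⟨hw1, ?_⟩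
      intro hb0
      rw [hb0, zero_mul] at hw1
      exact hd hw1
end

section
/- Let k be a finite field, r ∈ k, x ∈ F_k a word, and α, β ∈ k with α ≠ r. Set γ = (r² − (α − β)·r + 1 − α·β)·(r − α)⁻¹. Then the word αβx (α, then β, prepended to x) lies in A_r if and only if the word γx lies in A_r. -/
lemma piWord_cons {k : Type*} [Field k] (α : k) (w : List k) :
    piWord (α :: w) = !![0, 1; -1, α] * piWord w := by
  simp [piWord]

lemma piWord_cons01 {k : Type*} [Field k] (α : k) (w : List k) :
    piWord (α :: w) 0 1 = piWord w 1 1 := by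
  rw [piWord_cons]
  simp [Matrix.mul_apply, Fin.sum_univ_two]

lemma piWord_cons11 {k : Type*} [Field k] (α : k) (w : List k) :
    piWord (α :: w) 1 1 = -piWord w 0 1 + α * piWord w 1 1 := by
  rw [piWord_cons]
  simp [Matrix.mul_apply, Fin.sum_univ_two]

theorem stmt6 {k : Type*} [Field k] [Fintype k] (r : k) (x : List k) (α β : k)
    (hα : α ≠ r) (γ : k) (hγ : γ = (r ^ 2 - (α - β) * r + 1 - α * β) * (r - α)⁻¹) :
    α :: β :: x ∈ Ar r ↔ γ :: x ∈ Ar r := by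
  have hra : r - α ≠ 0 := sub_ne_zero.mpr (Ne.symm hα)
  have hαr : α - r ≠ 0 := sub_ne_zero.mpr hα
  have hγ' : γ * (r - α) = r ^ 2 - (α - β) * r + 1 - α * β := by
    rw [hγ]; field_simp
  set b := piWord x 0 1 with hb
  set d := piWord x 1 1 with hd
  simp only [Ar, Set.mem_setOf_eq, piWord_cons01, piWord_cons11, ← hb, ← hd]
  constructor
  · rintro ⟨h1, h2⟩
    have hdne : d ≠ 0 := by
      intro hd0
      have h3 : (α - r) * (-b + β * d) = 0 := by linear_combination h1 + hd0
      exact h2 ((mul_eq_zero.mp h3).resolve_left hαr)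
    refine ⟨?_, hdne⟩
    have key : (-b + γ * d - d * r) * (r - α) = 0 := by
      linear_combination (-1 : k) * h1 + d * hγ'
    have := (mul_eq_zero.mp key).resolve_right hra
    linear_combination this
  · rintro ⟨h1, hdne⟩
    constructor
    · have key : (-d + α * (-b + β * d) - (-b + β * d) * r) * (r - α) = 0 := by
        linear_combination (-(r - α) ^ 2) * h1 + d * (r - α) * hγ'
      have := (mul_eq_zero.mp key).resolve_right hra
      linear_combination this
    · intro heq
      have : d = 0 := by
        linear_combination (r - α) * h1 - (r - α) * heq - d * hγ'
      exact hdne this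
end
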